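/- Let X be a standard normal random variable and g : ℝ → ℝ a differentiable function such that both E[X·g(X)] and E[g'(X)] exist (are integrable). Then E[X·g(X)] = E[g'(X)]. -/

import Mathlib

open MeasureTheory ProbabilityTheory Filter Real Set

/-- The standard Gaussian pdf has derivative `-x * pdf x`. -/
lemma gaussianPDFReal_hasDerivAt (x : ℝ) :
    HasDerivAt (gaussianPDFReal 0 1) (-x * gaussianPDFReal 0 1 x) x := by
  simp only [gaussianPDFReal_def]
  have h1 : HasDerivAt (fun y : ℝ => -(y - 0) ^ 2 / (2 * ((1 : NNReal) : ℝ))) (-x) x := by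
    have : HasDerivAt (fun y : ℝ => -(y - 0) ^ 2 / (2 * ((1 : NNReal) : ℝ)))
        (-(2 * (x - 0) ^ 1) / 2) x := by
      simpa using ((((hasDerivAt_id x).sub_const 0).pow 2).neg.div_const 2)
    convert this using 1
    simp; ring
  have h2 := (h1.exp.const_mul ((√(2 * π * ((1 : NNReal) : ℝ)))⁻¹))
  exact h2.congr_deriv (by ring)

/-- If `x * F x` is integrable and `F` tends to `L` at `+∞`, then `L = 0`. -/
lemma limit_zero_atTop {F : ℝ → ℝ} {L : ℝ}
    (hF : Filter.Tendsto F Filter.atTop (nhds L))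
    (hint : MeasureTheory.Integrable (fun x => x * F x)) : L = 0 := by
  by_contra hL
  have hev : ∀ᶠ x in atTop, ‖L‖ / 2 ≤ ‖x * F x‖ := by
    have h1 : ∀ᶠ x in atTop, ‖F x - L‖ < ‖L‖ / 2 := by
      have := hF.sub_const L
      rw [sub_self] at this
      exact (this.norm.eventually (eventually_lt_nhds (show ‖(0:ℝ)‖ < ‖L‖/2 by rw [norm_zero]; exact div_pos (norm_pos_iff.mpr hL) two_pos)))
        |>.mono fun x hx => by simpa using hx
    filter_upwards [h1, eventually_ge_atTop (1 : ℝ)] with x hx hx1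
    have hFx : ‖L‖ / 2 ≤ ‖F x‖ := by
      have := norm_sub_norm_le (F x - L) (F x)
      simp only [sub_sub_cancel_left, norm_neg] at this
      have h2 := norm_sub_rev (F x) L
      nlinarith [norm_sub_norm_le L (F x), (norm_sub_rev (F x) L).le, hx,
        norm_nonneg (F x), norm_nonneg L]
    calc ‖L‖ / 2 ≤ ‖F x‖ := hFx
    _ = 1 * ‖F x‖ := by ring
    _ ≤ |x| * ‖F x‖ := by
        apply mul_le_mul_of_nonneg_right _ (norm_nonneg _)
        exact le_trans hx1 (le_abs_self x)
    _ = ‖x * F x‖ := by rw [norm_mul]; rfl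
  obtain ⟨A, hA⟩ := hev.exists_forall_of_atTop
  have hconst : MeasureTheory.Integrable (fun _ : ℝ => ‖L‖ / 2)
      (MeasureTheory.volume.restrict (Ioi A)) := by
    apply MeasureTheory.Integrable.mono' hint.norm.integrableOn
      aestronglyMeasurable_const
    rw [MeasureTheory.ae_restrict_iff' measurableSet_Ioi]
    refine MeasureTheory.ae_of_all _ fun x hx => ?_
    have h := hA x hx.le
    have : ‖(‖L‖ / 2)‖ = ‖L‖ / 2 := by
      rw [Real.norm_eq_abs]
      exact abs_of_nonneg (by positivity)
    rw [this]
    exact h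
  rw [MeasureTheory.integrable_const_iff] at hconst
  rcases hconst with h | h
  · exact hL (by simpa [norm_eq_abs, abs_eq_zero] using h)
  · rw [MeasureTheory.isFiniteMeasure_restrict, Real.volume_Ioi] at h
    exact h rfl

/-- If `x * F x` is integrable and `F` tends to `L` at `-∞`, then `L = 0`. -/
lemma limit_zero_atBot {F : ℝ → ℝ} {L : ℝ}
    (hF : Filter.Tendsto F Filter.atBot (nhds L))
    (hint : MeasureTheory.Integrable (fun x => x * F x)) : L = 0 := by
  have hF' : Filter.Tendsto (fun x => F (-x)) Filter.atTop (nhds L) :=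
    hF.comp tendsto_neg_atTop_atBot
  have hint' : MeasureTheory.Integrable (fun x => x * F (-x)) := by
    have h := (hint.comp_neg (μ := MeasureTheory.volume))
    have : (fun x : ℝ => x * F (-x)) = fun x => -((fun y => y * F y) (-x)) := by
      funext x; ring
    rw [this]
    exact h.neg
  exact limit_zero_atTop hF' hint'

/-- Stein's lemma: for `X ~ N(0,1)` and differentiable `g` with `x * g x` and `g'`
integrable w.r.t. the Gaussian measure, `E[X g(X)] = E[g'(X)]`. -/
theorem stein_lemma (g : ℝ → ℝ) (hg : Differentiable ℝ g)
    (h1 : Integrable (fun x => x * g x) (gaussianReal 0 1))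
    (h2 : Integrable (fun x => deriv g x) (gaussianReal 0 1)) :
    ∫ x, x * g x ∂(gaussianReal 0 1) = ∫ x, deriv g x ∂(gaussianReal 0 1) := by
  set p : ℝ → ℝ := gaussianPDFReal 0 1 with hp
  have hp_nonneg : ∀ x, 0 ≤ p x := fun x => gaussianPDFReal_nonneg 0 1 x
  have hp_meas : Measurable p := measurable_gaussianPDFReal 0 1
  set q : ℝ → NNReal := fun x => (p x).toNNReal with hq
  have hq_meas : Measurable q := hp_meas.real_toNNReal
  have hgauss : gaussianReal 0 1 = volume.withDensity (fun x => (q x : ENNReal)) := by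
    rw [gaussianReal_of_var_ne_zero 0 one_ne_zero]
    rfl
  have hsmul : ∀ (f : ℝ → ℝ), (fun x => q x • f x) = fun x => p x * f x := by
    intro f; funext x
    simp [hq, NNReal.smul_def, Real.coe_toNNReal _ (hp_nonneg x)]
  -- transfer integrability to Lebesgue measure
  have h1' : Integrable (fun x => p x * (x * g x)) volume := by
    rw [← hsmul]
    exact (integrable_withDensity_iff_integrable_smul hq_meas).mp (hgauss ▸ h1)
  have h2' : Integrable (fun x => p x * deriv g x) volume := by
    rw [← hsmul]
    exact (integrable_withDensity_iff_integrable_smul hq_meas).mp (hgauss ▸ h2)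
  -- the product F = g * p and its derivative
  set F : ℝ → ℝ := fun x => g x * p x with hF
  set h : ℝ → ℝ := fun x => deriv g x * p x - x * g x * p x with hh
  have hderiv : ∀ x, HasDerivAt F (h x) x := by
    intro x
    have := ((hg x).hasDerivAt.mul (gaussianPDFReal_hasDerivAt x))
    exact this.congr_deriv (by simp only [hh, hp]; ring)
  have hint : Integrable h volume := by
    have := h2'.sub h1'
    apply this.congr
    filter_upwards with x
    simp only [Pi.sub_apply, hh]; ring
  -- F tends to limits at ±∞
  have hFb : ∀ b : ℝ, F b = F 0 + ∫ x in (0:ℝ)..b, h x := by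
    intro b
    have := intervalIntegral.integral_eq_sub_of_hasDerivAt
      (f := F) (f' := h) (a := 0) (b := b)
      (fun x _ => hderiv x) hint.intervalIntegrable
    rw [this]; ring
  have htop : Tendsto F atTop (nhds (F 0 + ∫ x in Ioi (0:ℝ), h x)) := by
    have := (intervalIntegral_tendsto_integral_Ioi 0 hint.integrableOn tendsto_id).const_add (F 0)
    apply this.congr
    intro b; exact (hFb b).symm
  have hbot : Tendsto F atBot (nhds (F 0 + ∫ x in Iic (0:ℝ), (-h x))) := by
    have h0 : Tendsto (fun a => ∫ x in a..(0:ℝ), h x) atBot (nhds (∫ x in Iic (0:ℝ), h x)) :=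
      intervalIntegral_tendsto_integral_Iic 0 hint.integrableOn tendsto_id
    have : Tendsto (fun a => F 0 - ∫ x in a..(0:ℝ), h x) atBot
        (nhds (F 0 - ∫ x in Iic (0:ℝ), h x)) := (h0.const_sub (F 0))
    have heq : (F 0 - ∫ x in Iic (0:ℝ), h x) = F 0 + ∫ x in Iic (0:ℝ), (-h x) := by
      rw [integral_neg]; ring
    rw [← heq]
    apply this.congr
    intro a
    rw [hFb a, intervalIntegral.integral_symm]
    ring
  -- x * F x is integrable, so both limits vanish
  have hxF : Integrable (fun x => x * F x) volume := by
    apply h1'.congr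
    filter_upwards with x
    simp only [hF]; ring
  have hLtop : F 0 + ∫ x in Ioi (0:ℝ), h x = 0 := limit_zero_atTop htop hxF
  have hLbot : F 0 + ∫ x in Iic (0:ℝ), (-h x) = 0 := limit_zero_atBot hbot hxF
  -- integral of h over ℝ is zero
  have hzero : ∫ x, h x = 0 := by
    have := integral_of_hasDerivAt_of_tendsto hderiv hint hbot htop
    rw [this, hLtop, hLbot]
    ring
  -- convert back to gaussian integrals
  have hgi : ∀ (f : ℝ → ℝ), ∫ x, f x ∂(gaussianReal 0 1) = ∫ x, p x * f x := by
    intro f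
    rw [hgauss, integral_withDensity_eq_integral_smul hq_meas, ← hsmul f]
  rw [hgi, hgi]
  have := integral_sub h2' h1'
  have hsub : ∫ x, (p x * deriv g x - p x * (x * g x)) = 0 := by
    rw [← hzero]
    congr 1
    funext x
    simp only [hh]; ring
  rw [this] at hsub
  linarith
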